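/- The spanning tree probability P_ST(Υ) = Z_e ∏_{ξ∈Υ} C_ξ defines a probability measure: Σ_{Υ ∈ ST_{X,Δ}} ∏_{(x,y)∈Υ} C_{x,y} ∏_{x : (x,Δ)∈Υ} κ_x = det(M_λ − C), i.e. the weighted matrix-tree theorem for trees rooted at the cemetery point Δ. -/

import Mathlib

open Matrix Finset

/-- A spanning arborescence of `X ∪ {Δ}` rooted at the cemetery `Δ`, encoded
by the parent map `f : X → Option X` (`none` is `Δ`): from every vertex the
parent chain reaches the root, so there are no cycles. -/
def IsSpanningArbo {X : Type*} (f : X → Option X) : Prop :=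
  ∀ x : X, ∃ k : ℕ, (fun o : Option X => o.bind f)^[k] (some x) = none

noncomputable section
variable {X : Type*} [Fintype X] [DecidableEq X]

/-- the row attached to the choice `o` at vertex `x` -/
def mttr (x : X) (o : Option X) : X → ℝ :=
  o.elim (Pi.single x 1) (fun z => Pi.single x 1 - Pi.single z 1)

lemma mttr_apply (f : X → Option X) (x y : X) :
    mttr x (f x) y = (if x = y then (1:ℝ) else 0) - (if f x = some y then 1 else 0) := by
  cases hfx : f x with
  | none => simp [mttr, Pi.single_apply, eq_comm]
  | some z => simp [mttr, Pi.single_apply, eq_comm]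

lemma mtt_chain {X : Type*} (f : X → Option X) (z : ℕ → X)
    (hz : ∀ k, f (z k) = some (z (k+1))) (k : ℕ) :
    (fun o : Option X => o.bind f)^[k] (some (z 0)) = some (z k) := by
  induction k with
  | zero => rfl
  | succ k ih =>
      rw [Function.iterate_succ_apply']
      simp [ih, hz k]

lemma mtt_no_chain {X : Type*} {f : X → Option X} (hf : IsSpanningArbo f)
    (z : ℕ → X) (hz : ∀ k, f (z k) = some (z (k+1))) : False := by
  obtain ⟨k, hk⟩ := hf (z 0)
  rw [mtt_chain f z hz k] at hk
  exact Option.some_ne_none _ hk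

lemma mtt_det_arbo (f : X → Option X) (hf : IsSpanningArbo f) :
    (Matrix.of (fun x => mttr x (f x))).det = 1 := by
  classical
  rw [Matrix.det_apply']
  rw [Finset.sum_eq_single_of_mem (1 : Equiv.Perm X) (Finset.mem_univ _)]
  · have h1 : ∀ x : X, (Matrix.of (fun x => mttr x (f x))) x x = 1 := by
      intro x
      have hne : f x ≠ some x := by
        intro h
        exact mtt_no_chain hf (fun _ => x) (fun _ => h)
      simp [Matrix.of_apply, mttr_apply, hne]
    simp [h1]
  · intro σ _ hσ
    rcases Function.ne_iff.mp (fun h => hσ (Equiv.ext fun x => congrFun h x)) with ⟨x₀, hx₀⟩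
    have hx₀' : σ x₀ ≠ x₀ := by simpa using hx₀
    by_contra hne
    have hprod : ∀ x : X, (Matrix.of (fun x => mttr x (f x))) (σ x) x ≠ 0 := by
      intro x hx
      apply hne
      have h0 : (∏ i : X, (Matrix.of (fun x => mttr x (f x))) (σ i) i) = 0 :=
        Finset.prod_eq_zero (f := fun i => (Matrix.of (fun x => mttr x (f x))) (σ i) i)
          (Finset.mem_univ x) hx
      rw [h0, mul_zero]
    set z : ℕ → X := fun k => ((σ⁻¹)^k) x₀ with hzdef
    have hcomm : ∀ k, σ (((σ⁻¹ : Equiv.Perm X)^k) x₀) = ((σ⁻¹)^k) (σ x₀) := by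
      intro k
      have : σ * (σ⁻¹)^k = (σ⁻¹)^k * σ :=
        ((Commute.refl σ).inv_right.pow_right k).eq
      exact congrFun (congrArg (fun p : Equiv.Perm X => (p : X → X)) this) x₀
    have hzne : ∀ k, σ (z k) ≠ z k := by
      intro k h
      apply hx₀'
      rw [hzdef] at h
      simp only [hcomm k] at h
      exact (Equiv.injective _) h
    have hzsucc : ∀ k, σ (z (k+1)) = z k := by
      intro k
      rw [hzdef]
      simp only [pow_succ']
      simp [Equiv.Perm.mul_apply]
    have hchain : ∀ k, f (z k) = some (z (k+1)) := by
      intro k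
      have h := hprod (z (k+1))
      rw [hzsucc k] at h
      rw [Matrix.of_apply, mttr_apply] at h
      have h1 : z k ≠ z (k+1) := by
        intro h'
        exact hzne (k+1) (by rw [hzsucc k, h'])
      by_contra h2
      simp [h1, h2] at h
    have : z 0 = x₀ := by simp [hzdef]; rfl
    exact mtt_no_chain hf z hchain

lemma mtt_helper (f : X → Option X) (z : ℕ → X)
    (hchain : ∀ k, f (z k) = some (z (k+1))) (i j : ℕ) (hij : i < j) (hzij : z i = z j) :
    (Matrix.of (fun x => mttr x (f x))).det = 0 := by
  classical
  rw [← Matrix.exists_vecMul_eq_zero_iff]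
  set M : Matrix X X ℝ := Matrix.of (fun x => mttr x (f x)) with hM
  refine ⟨fun y => (((Finset.Ico i j).filter (fun k => z k = y)).card : ℝ), ?_, ?_⟩
  · intro h0
    have h1 := congrFun h0 (z i)
    have h2 : i ∈ (Finset.Ico i j).filter (fun k => z k = z i) := by
      simp [Finset.mem_Ico, hij]
    simp only [Pi.zero_apply, Nat.cast_eq_zero, Finset.card_eq_zero] at h1
    rw [h1] at h2
    exact absurd h2 (Finset.notMem_empty i)
  · funext y
    have hrow : ∀ k, M (z k) y
        = (if z k = y then (1:ℝ) else 0) - (if z (k+1) = y then 1 else 0) := by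
      intro k
      rw [hM, Matrix.of_apply, mttr_apply, hchain k]
      simp
    have hmain : ∑ x : X, (((Finset.Ico i j).filter (fun k => z k = x)).card : ℝ) * M x y
        = ∑ k ∈ Finset.Ico i j, M (z k) y := by
      rw [← Finset.sum_fiberwise_of_maps_to (g := z) (fun k _ => Finset.mem_univ (z k))
        (fun k => M (z k) y)]
      refine Finset.sum_congr rfl fun x _ => ?_
      rw [Finset.sum_congr rfl (fun k hk => ?_), Finset.sum_const, nsmul_eq_mul]
      rw [(Finset.mem_filter.mp hk).2]
    have htel : ∑ k ∈ Finset.Ico i j, M (z k) y = 0 := by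
      rw [Finset.sum_congr rfl (fun k _ => hrow k),
        Finset.sum_Ico_eq_sub _ (le_of_lt hij), Finset.sum_range_sub' (fun k => if z k = y then (1:ℝ) else 0),
        Finset.sum_range_sub' (fun k => if z k = y then (1:ℝ) else 0), hzij]
      ring
    have : Matrix.vecMul (fun y => (((Finset.Ico i j).filter (fun k => z k = y)).card : ℝ)) M y
        = ∑ x : X, (((Finset.Ico i j).filter (fun k => z k = x)).card : ℝ) * M x y := by
      simp [Matrix.vecMul, dotProduct]
    rw [Pi.zero_apply, this, hmain, htel]


lemma mtt_det_not_arbo (f : X → Option X) (hf : ¬ IsSpanningArbo f) :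
    (Matrix.of (fun x => mttr x (f x))).det = 0 := by
  classical
  rw [IsSpanningArbo] at hf
  push_neg at hf
  obtain ⟨x₀, hx₀⟩ := hf
  have hs : ∀ k : ℕ, ((fun o : Option X => o.bind f)^[k] (some x₀)).isSome := by
    intro k
    exact Option.ne_none_iff_isSome.mp (hx₀ k)
  set z : ℕ → X := fun k => ((fun o : Option X => o.bind f)^[k] (some x₀)).get (hs k) with hz
  have hiter : ∀ k, (fun o : Option X => o.bind f)^[k] (some x₀) = some (z k) := by
    intro k; simp [hz]
  have hchain : ∀ k, f (z k) = some (z (k+1)) := by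
    intro k
    have h1 := hiter (k+1)
    rw [Function.iterate_succ_apply', hiter k] at h1
    simpa using h1
  -- pigeonhole
  obtain ⟨a, b, hab, heq⟩ :=
    Fintype.exists_ne_map_eq_of_card_lt (fun k : Fin (Fintype.card X + 1) => z k)
      (by simp)
  rcases Ne.lt_or_gt hab with h | h
  · exact mtt_helper f z hchain a b h heq
  · exact mtt_helper f z hchain b a h heq.symm

end

open Classical in
theorem matrix_tree_rooted {X : Type*} [Fintype X] [DecidableEq X]
    (C : Matrix X X ℝ) (κ lam : X → ℝ)
    (hsymm : ∀ x y, C x y = C y x) (hC : ∀ x y, 0 ≤ C x y)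
    (hdiag : ∀ x, C x x = 0) (hκ : ∀ x, 0 ≤ κ x)
    (hlam : ∀ x, lam x = κ x + ∑ y, C x y)
    (hpd : (Matrix.diagonal lam - C).PosDef) :
    ∑ f : X → Option X,
        (if IsSpanningArbo f then ∏ x, (f x).elim (κ x) (fun y => C x y) else 0)
      = (Matrix.diagonal lam - C).det := by
  have hrow : (Matrix.diagonal lam - C) =
      Matrix.of (fun x => ∑ o : Option X, (o.elim (κ x) (fun y => C x y)) • mttr x o) := by
    ext x y
    rw [Matrix.of_apply]
    simp only [Fintype.sum_option, Option.elim, mttr, Pi.add_apply, Finset.sum_apply,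
      Pi.smul_apply, Pi.sub_apply, Pi.single_apply, smul_eq_mul]
    rcases eq_or_ne x y with h | h
    · subst h
      simp [Matrix.diagonal_apply_eq, hlam x, mul_sub, Finset.sum_sub_distrib,
        Finset.sum_ite_eq', hdiag x]
    · simp [Matrix.diagonal_apply_ne _ h, Ne.symm h, mul_sub, Finset.sum_sub_distrib,
        Finset.sum_ite_eq']
  rw [hrow]
  have hdet : (Matrix.of (fun x => ∑ o : Option X,
      (o.elim (κ x) (fun y => C x y)) • mttr x o)).det
      = Matrix.detRowAlternating
          (fun x => ∑ o : Option X, (o.elim (κ x) (fun y => C x y)) • mttr x o) := rfl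
  have hms := (Matrix.detRowAlternating (R := ℝ) (n := X)).toMultilinearMap.map_sum
      (g := fun x o => (o.elim (κ x) (fun y => C x y)) • mttr x o)
  simp only [AlternatingMap.coe_multilinearMap] at hms
  rw [hdet, hms]
  refine (Finset.sum_congr rfl fun f _ => ?_).symm
  have hsm := (Matrix.detRowAlternating (R := ℝ) (n := X)).toMultilinearMap.map_smul_univ
      (fun x => (f x).elim (κ x) (fun y => C x y)) (fun x => mttr x (f x))
  simp only [AlternatingMap.coe_multilinearMap] at hsm
  rw [hsm]
  have hda : Matrix.detRowAlternating (fun x => mttr x (f x))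
      = (Matrix.of (fun x => mttr x (f x))).det := rfl
  rw [hda]
  by_cases h : IsSpanningArbo f
  · rw [if_pos h, mtt_det_arbo f h, smul_eq_mul, mul_one]
  · rw [if_neg h, mtt_det_not_arbo f h, smul_eq_mul, mul_zero]
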